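/- arXiv:0902.2533 — 4 statements merged into one kernel-verified Lean document; each statement's English description precedes it below -/
import Mathlib

section
/- The formal power series E(t) = exp(-∑_{r≥0} t^{p^r}/p^r) over ℚ equals the infinite product ∏_{r≥1, gcd(r,p)=1} (1-t^r)^{μ(r)/r}, where μ is the Möbius function. -/
open scoped Classical

/-- Formal composition `f(g(t))` of power series over `ℚ` (meaningful when `g` has zero
constant term): the `n`-th coefficient is `∑_{k ≤ n} f_k · [t^n](g^k)`. -/
noncomputable def PSComp (g f : PowerSeries ℚ) : PowerSeries ℚ :=
  PowerSeries.mk fun n =>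
    ∑ k ∈ Finset.range (n + 1), PowerSeries.coeff k f * PowerSeries.coeff n (g ^ k)

/-- The Artin–Hasse exponential `E(t) = exp(-∑_{r ≥ 0} t^{p^r}/p^r)`, obtained by
substituting `-∑_{r≥0} t^{p^r}/p^r` (whose coefficient at `n = p^r` is `-1/n`) into the
exponential power series. -/
noncomputable def artinHasseExp (p : ℕ) : PowerSeries ℚ :=
  PSComp (PowerSeries.mk fun n => if ∃ k : ℕ, n = p ^ k then -(1 / (n : ℚ)) else 0)
    (PowerSeries.exp ℚ)

/-- `log(1 - t^r) = -∑_{k ≥ 1} t^{rk}/k`; the coefficient at `n = rk` is `-1/k = -r/n`. -/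
noncomputable def logOneSubPow (r : ℕ) : PowerSeries ℚ :=
  PowerSeries.mk fun n => if n ≠ 0 ∧ r ∣ n then -((r : ℚ) / (n : ℚ)) else 0

/-- The binomial-series power `(1 - t^r)^{μ(r)/r} = exp((μ(r)/r) · log(1 - t^r))`. -/
noncomputable def moebiusFactor (r : ℕ) : PowerSeries ℚ :=
  PSComp ((((ArithmeticFunction.moebius r : ℤ) : ℚ) / (r : ℚ)) • logOneSubPow r)
    (PowerSeries.exp ℚ)

/-- The infinite product `∏_{r ≥ 1, gcd(r,p) = 1} (1 - t^r)^{μ(r)/r}`: since the factor for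
`r` is `1 + O(t^r)`, its `n`-th coefficient equals the `n`-th coefficient of the finite
product over `1 ≤ r ≤ n` with `gcd(r,p) = 1`. -/
noncomputable def moebiusProd (p : ℕ) : PowerSeries ℚ :=
  PowerSeries.mk fun n =>
    PowerSeries.coeff n
      (∏ r ∈ (Finset.range (n + 1)).filter (fun r => 1 ≤ r ∧ Nat.gcd r p = 1),
        moebiusFactor r)

open Finset PowerSeries

/-! ### Auxiliary lemmas -/

lemma AH.coeff_pow_eq_zero {g : PowerSeries ℚ} (hg : constantCoeff g = 0) :
    ∀ (k n : ℕ), n < k → coeff n (g ^ k) = 0 := by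
  intro k
  induction k with
  | zero => intro n h; omega
  | succ k ih =>
    intro n h
    rw [pow_succ, coeff_mul]
    apply Finset.sum_eq_zero
    rintro ⟨i, j⟩ hij
    rw [Finset.HasAntidiagonal.mem_antidiagonal] at hij
    by_cases hi : i < k
    · rw [ih i hi, zero_mul]
    · have hj : j = 0 := by omega
      subst hj
      rw [coeff_zero_eq_constantCoeff, hg, mul_zero]

lemma AH.coeff_mul_pow_eq_zero {a b : PowerSeries ℚ} (ha : constantCoeff a = 0)
    (hb : constantCoeff b = 0) {k l n : ℕ} (h : n < k + l) :
    coeff n (a ^ k * b ^ l) = 0 := by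
  rw [coeff_mul]
  apply Finset.sum_eq_zero
  rintro ⟨i, j⟩ hij
  rw [Finset.HasAntidiagonal.mem_antidiagonal] at hij
  by_cases hi : i < k
  · rw [AH.coeff_pow_eq_zero ha k i hi, zero_mul]
  · rw [AH.coeff_pow_eq_zero hb l j (by omega), mul_zero]

lemma AH.coeff_PSComp_exp (g : PowerSeries ℚ) (n : ℕ) :
    coeff n (PSComp g (PowerSeries.exp ℚ)) =
      ∑ k ∈ Finset.range (n + 1), (1 / (Nat.factorial k) : ℚ) * coeff n (g ^ k) := by
  simp [PSComp, coeff_mk, PowerSeries.coeff_exp, Algebra.algebraMap_self, RingHom.id_apply]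

lemma AH.coeff_PSComp_exp' {g : PowerSeries ℚ} (hg : constantCoeff g = 0) {n N : ℕ}
    (h : n < N) :
    coeff n (PSComp g (PowerSeries.exp ℚ)) =
      ∑ k ∈ Finset.range N, (1 / (Nat.factorial k) : ℚ) * coeff n (g ^ k) := by
  rw [AH.coeff_PSComp_exp]
  apply Finset.sum_subset
  · intro k hk
    simp only [mem_range] at hk ⊢
    omega
  · intro k hk hk2
    simp only [mem_range] at hk hk2
    rw [AH.coeff_pow_eq_zero hg k n (by omega), mul_zero]

lemma AH.reindex (n : ℕ) (F : ℕ → ℕ → ℚ) :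
    ∑ m ∈ Finset.range (n + 1), ∑ k ∈ Finset.range (m + 1), F k (m - k)
      = ∑ q ∈ ((Finset.range (n + 1)) ×ˢ (Finset.range (n + 1))).filter
          (fun q => q.1 + q.2 ≤ n), F q.1 q.2 := by
  rw [Finset.sum_sigma']
  apply Finset.sum_nbij' (i := fun x => (x.2, x.1 - x.2)) (j := fun q => ⟨q.1 + q.2, q.1⟩)
  · rintro ⟨m, k⟩ h
    simp only [mem_sigma, mem_range, mem_filter, mem_product] at h ⊢
    omega
  · rintro ⟨k, l⟩ h
    simp only [mem_sigma, mem_range, mem_filter, mem_product] at h ⊢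
    omega
  · rintro ⟨m, k⟩ h
    simp only [mem_sigma, mem_range] at h
    simp
    omega
  · rintro ⟨k, l⟩ h; simp
  · rintro ⟨m, k⟩ h; rfl

lemma AH.PSComp_exp_mul {a b : PowerSeries ℚ} (ha : constantCoeff a = 0)
    (hb : constantCoeff b = 0) :
    PSComp (a + b) (PowerSeries.exp ℚ) =
      PSComp a (PowerSeries.exp ℚ) * PSComp b (PowerSeries.exp ℚ) := by
  ext n
  set F : ℕ → ℕ → ℚ := fun k l =>
    ((1 / (Nat.factorial k) : ℚ) * (1 / (Nat.factorial l) : ℚ)) * coeff n (a ^ k * b ^ l)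
    with hF
  have key : ∀ q : ℕ × ℕ, n < q.1 + q.2 → F q.1 q.2 = 0 := by
    rintro ⟨k, l⟩ h
    simp only [hF]
    rw [AH.coeff_mul_pow_eq_zero ha hb h, mul_zero]
  have hL : coeff n (PSComp (a + b) (PowerSeries.exp ℚ)) =
      ∑ m ∈ Finset.range (n + 1), ∑ k ∈ Finset.range (m + 1), F k (m - k) := by
    rw [AH.coeff_PSComp_exp]
    apply Finset.sum_congr rfl
    intro m _
    rw [add_pow, map_sum, Finset.mul_sum]
    apply Finset.sum_congr rfl
    intro k hk
    rw [mem_range] at hk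
    have hkm : k ≤ m := by omega
    have hfac : (1 / (Nat.factorial m) : ℚ) * (m.choose k : ℚ) =
        (1 / (Nat.factorial k) : ℚ) * (1 / (Nat.factorial (m - k)) : ℚ) := by
      rw [Nat.cast_choose ℚ hkm]
      have h1 : (Nat.factorial m : ℚ) ≠ 0 := Nat.cast_ne_zero.mpr (Nat.factorial_ne_zero m)
      have h2 : (Nat.factorial k : ℚ) ≠ 0 := Nat.cast_ne_zero.mpr (Nat.factorial_ne_zero k)
      have h3 : (Nat.factorial (m - k) : ℚ) ≠ 0 :=
        Nat.cast_ne_zero.mpr (Nat.factorial_ne_zero (m - k))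
      field_simp
    rw [← map_natCast (PowerSeries.C (R := ℚ)) (m.choose k), PowerSeries.coeff_mul_C]
    simp only [hF]
    calc (1 / (Nat.factorial m) : ℚ) * (coeff n (a ^ k * b ^ (m - k)) * (m.choose k : ℚ))
        = ((1 / (Nat.factorial m) : ℚ) * (m.choose k : ℚ)) * coeff n (a ^ k * b ^ (m - k)) := by
          ring
      _ = _ := by rw [hfac]
  have hR : coeff n (PSComp a (PowerSeries.exp ℚ) * PSComp b (PowerSeries.exp ℚ)) =
      ∑ k ∈ Finset.range (n + 1), ∑ l ∈ Finset.range (n + 1), F k l := by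
    rw [coeff_mul]
    calc ∑ q ∈ Finset.HasAntidiagonal.antidiagonal n,
          coeff q.1 (PSComp a (PowerSeries.exp ℚ)) * coeff q.2 (PSComp b (PowerSeries.exp ℚ))
        = ∑ q ∈ Finset.HasAntidiagonal.antidiagonal n, ∑ k ∈ Finset.range (n + 1), ∑ l ∈ Finset.range (n + 1),
            ((1 / (Nat.factorial k) : ℚ) * coeff q.1 (a ^ k)) *
              ((1 / (Nat.factorial l) : ℚ) * coeff q.2 (b ^ l)) := by
          apply Finset.sum_congr rfl
          rintro ⟨i, j⟩ hij
          rw [Finset.HasAntidiagonal.mem_antidiagonal] at hij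
          rw [AH.coeff_PSComp_exp' ha (show i < n + 1 by omega),
            AH.coeff_PSComp_exp' hb (show j < n + 1 by omega), Finset.sum_mul_sum]
      _ = ∑ k ∈ Finset.range (n + 1), ∑ l ∈ Finset.range (n + 1), ∑ q ∈ Finset.HasAntidiagonal.antidiagonal n,
            ((1 / (Nat.factorial k) : ℚ) * coeff q.1 (a ^ k)) *
              ((1 / (Nat.factorial l) : ℚ) * coeff q.2 (b ^ l)) := by
          rw [Finset.sum_comm]
          apply Finset.sum_congr rfl
          intro k _
          rw [Finset.sum_comm]
      _ = ∑ k ∈ Finset.range (n + 1), ∑ l ∈ Finset.range (n + 1), F k l := by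
          apply Finset.sum_congr rfl
          intro k _
          apply Finset.sum_congr rfl
          intro l _
          simp only [hF]
          rw [coeff_mul, Finset.mul_sum]
          apply Finset.sum_congr rfl
          rintro ⟨i, j⟩ _
          ring
  rw [hL, hR, AH.reindex n F, ← Finset.sum_product' (Finset.range (n + 1)) (Finset.range (n + 1)) F]
  rw [Finset.sum_filter_of_ne]
  intro q _ hq
  by_contra h
  exact hq (key q (by omega))

lemma AH.PSComp_zero_exp : PSComp 0 (PowerSeries.exp ℚ) = 1 := by
  ext n
  rw [AH.coeff_PSComp_exp]
  rw [Finset.sum_eq_single 0]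
  · simp
  · intro k _ hk0
    rw [zero_pow hk0]
    simp
  · simp

lemma AH.PSComp_exp_prod (S : Finset ℕ) (g : ℕ → PowerSeries ℚ)
    (hg : ∀ r ∈ S, constantCoeff (g r) = 0) :
    ∏ r ∈ S, PSComp (g r) (PowerSeries.exp ℚ) = PSComp (∑ r ∈ S, g r) (PowerSeries.exp ℚ) := by
  induction S using Finset.cons_induction with
  | empty => simpa using AH.PSComp_zero_exp.symm
  | cons r S hr ih =>
    rw [Finset.prod_cons, Finset.sum_cons,
      AH.PSComp_exp_mul (hg r (Finset.mem_cons_self r S))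
        (by rw [map_sum]; exact Finset.sum_eq_zero fun x hx => hg x (Finset.mem_cons_of_mem hx)),
      ih fun x hx => hg x (Finset.mem_cons_of_mem hx)]

lemma AH.coeff_pow_congr {A B : PowerSeries ℚ} {n : ℕ}
    (h : ∀ m ≤ n, coeff m A = coeff m B) (k : ℕ) :
    ∀ m ≤ n, coeff m (A ^ k) = coeff m (B ^ k) := by
  induction k with
  | zero => simp
  | succ k ih =>
    intro m hm
    rw [pow_succ, pow_succ, coeff_mul, coeff_mul]
    apply Finset.sum_congr rfl
    rintro ⟨i, j⟩ hij
    rw [Finset.HasAntidiagonal.mem_antidiagonal] at hij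
    rw [ih i (by omega), h j (by omega)]

/-- Divisors of `n` coprime to `p` are the divisors of `ordCompl[p] n`. -/
lemma AH.filter_divisors_eq {p : ℕ} (hp : p.Prime) {n : ℕ} (hn : n ≠ 0) :
    n.divisors.filter (fun r => Nat.gcd r p = 1) = (ordCompl[p] n).divisors := by
  ext r
  simp only [Finset.mem_filter, Nat.mem_divisors]
  constructor
  · rintro ⟨⟨hrn, _⟩, hg⟩
    refine ⟨?_, (Nat.ordCompl_pos p hn).ne'⟩
    have hco : Nat.Coprime r (p ^ n.factorization p) :=
      Nat.Coprime.pow_right _ hg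
    have : r ∣ p ^ n.factorization p * ordCompl[p] n := by
      rwa [Nat.ordProj_mul_ordCompl_eq_self]
    exact hco.dvd_of_dvd_mul_left this
  · rintro ⟨hr, _⟩
    refine ⟨⟨hr.trans (Nat.ordCompl_dvd n p), hn⟩, ?_⟩
    have hpc : Nat.Coprime p (ordCompl[p] n) := Nat.coprime_ordCompl hp hn
    exact Nat.Coprime.gcd_eq_one ((hpc.coprime_dvd_right hr).symm)

/-- `n ≥ 1` is a power of `p` iff its `p`-free part is `1`. -/
lemma AH.pow_iff_ordCompl {p : ℕ} (hp : p.Prime) {n : ℕ} (hn : n ≠ 0) :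
    (∃ k : ℕ, n = p ^ k) ↔ ordCompl[p] n = 1 := by
  constructor
  · rintro ⟨k, rfl⟩
    have : (p ^ k).factorization p = k := by
      simp [hp.factorization_pow]
    rw [this]
    exact Nat.div_self (pow_pos hp.pos k)
  · intro h
    refine ⟨n.factorization p, ?_⟩
    have := Nat.ordProj_mul_ordCompl_eq_self n p
    rw [h, mul_one] at this
    omega

lemma AH.sum_moebius_filter {p : ℕ} (hp : p.Prime) {n : ℕ} (hn : n ≠ 0) :
    ∑ r ∈ n.divisors.filter (fun r => Nat.gcd r p = 1), ArithmeticFunction.moebius r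
      = if ∃ k : ℕ, n = p ^ k then 1 else 0 := by
  rw [AH.filter_divisors_eq hp hn]
  have h2 := ArithmeticFunction.coe_mul_zeta_apply
    (f := ArithmeticFunction.moebius) (x := ordCompl[p] n)
  rw [ArithmeticFunction.moebius_mul_coe_zeta, ArithmeticFunction.one_apply] at h2
  rw [← h2]
  congr 1
  simp only [eq_iff_iff]
  exact (AH.pow_iff_ordCompl hp hn).symm

/-- The coefficient of the truncated sum of logs matches the Artin–Hasse argument. -/
lemma AH.coeff_G {p : ℕ} (hp : p.Prime) {m N : ℕ} (hm : m ≠ 0) (hmN : m ≤ N) :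
    coeff m (∑ r ∈ (Finset.range (N + 1)).filter (fun r => 1 ≤ r ∧ Nat.gcd r p = 1),
        ((((ArithmeticFunction.moebius r : ℤ) : ℚ) / (r : ℚ)) • logOneSubPow r))
      = if ∃ k : ℕ, m = p ^ k then -(1 / (m : ℚ)) else 0 := by
  rw [map_sum]
  have step1 : ∀ r ∈ (Finset.range (N + 1)).filter (fun r => 1 ≤ r ∧ Nat.gcd r p = 1),
      coeff m ((((ArithmeticFunction.moebius r : ℤ) : ℚ) / (r : ℚ)) • logOneSubPow r)
        = if r ∣ m then -(((ArithmeticFunction.moebius r : ℤ) : ℚ) / (m : ℚ)) else 0 := by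
    intro r hr
    rw [Finset.mem_filter, mem_range] at hr
    have hr1 : (r : ℚ) ≠ 0 := Nat.cast_ne_zero.mpr (by omega)
    rw [map_smul, smul_eq_mul, logOneSubPow, coeff_mk]
    by_cases hd : r ∣ m
    · rw [if_pos ⟨hm, hd⟩, if_pos hd]
      field_simp
    · rw [if_neg (by tauto), if_neg hd, mul_zero]
  rw [Finset.sum_congr rfl step1]
  have step2 : ∑ r ∈ (Finset.range (N + 1)).filter (fun r => 1 ≤ r ∧ Nat.gcd r p = 1),
      (if r ∣ m then -(((ArithmeticFunction.moebius r : ℤ) : ℚ) / (m : ℚ)) else 0)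
      = ∑ r ∈ m.divisors.filter (fun r => Nat.gcd r p = 1),
          (if r ∣ m then -(((ArithmeticFunction.moebius r : ℤ) : ℚ) / (m : ℚ)) else 0) := by
    symm
    apply Finset.sum_subset
    · intro r hrT
      rw [Finset.mem_filter, Nat.mem_divisors] at hrT
      obtain ⟨⟨hrd, _⟩, hg⟩ := hrT
      rw [Finset.mem_filter, mem_range]
      have hrm : r ≤ m := Nat.le_of_dvd (by omega) hrd
      have hr0 : r ≠ 0 := by
        rintro rfl
        exact hm (Nat.eq_zero_of_zero_dvd hrd)
      exact ⟨by omega, by omega, hg⟩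
    · intro r hrS hrT
      rw [Finset.mem_filter] at hrS
      rw [if_neg]
      intro hd
      exact hrT (Finset.mem_filter.mpr ⟨Nat.mem_divisors.mpr ⟨hd, hm⟩, hrS.2.2⟩)
  rw [step2]
  have step3 : ∑ r ∈ m.divisors.filter (fun r => Nat.gcd r p = 1),
      (if r ∣ m then -(((ArithmeticFunction.moebius r : ℤ) : ℚ) / (m : ℚ)) else 0)
      = -(1 / (m : ℚ)) * ((∑ r ∈ m.divisors.filter (fun r => Nat.gcd r p = 1),
          ArithmeticFunction.moebius r : ℤ) : ℚ) := by
    push_cast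
    rw [Finset.mul_sum]
    apply Finset.sum_congr rfl
    intro r hr
    rw [Finset.mem_filter, Nat.mem_divisors] at hr
    rw [if_pos hr.1.1]
    ring
  rw [step3, AH.sum_moebius_filter hp hm]
  by_cases hpow : ∃ k : ℕ, m = p ^ k
  · rw [if_pos hpow, if_pos hpow]
    norm_num
  · rw [if_neg hpow, if_neg hpow]
    norm_num

/-- The Artin–Hasse exponential `E(t) = exp(-∑_{r≥0} t^{p^r}/p^r)` over `ℚ` equals the
infinite product `∏_{r ≥ 1, gcd(r,p)=1} (1 - t^r)^{μ(r)/r}`, where `μ` is the Möbius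
function. -/
theorem artinHasseExp_eq_moebiusProd (p : ℕ) (hp : p.Prime) :
    artinHasseExp p = moebiusProd p := by
  ext n
  set a : PowerSeries ℚ :=
    PowerSeries.mk fun n => if ∃ k : ℕ, n = p ^ k then -(1 / (n : ℚ)) else 0 with ha
  set g : ℕ → PowerSeries ℚ := fun r =>
    (((ArithmeticFunction.moebius r : ℤ) : ℚ) / (r : ℚ)) • logOneSubPow r with hgdef
  have hg0 : ∀ r, constantCoeff (g r) = 0 := by
    intro r
    rw [hgdef]
    simp only [← coeff_zero_eq_constantCoeff]
    rw [map_smul, smul_eq_mul, logOneSubPow, coeff_mk]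
    simp
  set S := (Finset.range (n + 1)).filter (fun r => 1 ≤ r ∧ Nat.gcd r p = 1) with hS
  have hprod : (∏ r ∈ S, moebiusFactor r) = PSComp (∑ r ∈ S, g r) (PowerSeries.exp ℚ) :=
    AH.PSComp_exp_prod S g (fun r _ => hg0 r)
  rw [moebiusProd, coeff_mk, hprod, artinHasseExp]
  rw [AH.coeff_PSComp_exp, AH.coeff_PSComp_exp]
  apply Finset.sum_congr rfl
  intro k _
  congr 1
  refine AH.coeff_pow_congr (fun m hm => ?_) k n le_rfl
  rw [coeff_mk]
  by_cases hm0 : m = 0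
  · subst hm0
    rw [map_sum]
    have : ∀ r ∈ S, coeff 0 (g r) = 0 := by
      intro r _
      rw [coeff_zero_eq_constantCoeff]
      exact hg0 r
    have hnot : ¬ ∃ k' : ℕ, (0 : ℕ) = p ^ k' := by
      rintro ⟨k', hk'⟩
      exact pow_ne_zero k' hp.pos.ne' hk'.symm
    rw [Finset.sum_eq_zero this, if_neg hnot]
  · rw [AH.coeff_G hp hm0 (by omega)]
end

section
/- For a discrete valuation field K of characteristic p > 0 and n ∈ ℕ, the set fil_n W_r(K) = { (f_{r-1},…,f_0) ∈ W_r(K) : v(f_i) ≥ -n/p^i for all 0 ≤ i ≤ r-1 } is a subgroup of the additive group of Witt vectors W_r(K) of length r. -/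
open WittVector Function

section TeichMul

variable (p : ℕ) [hp : Fact p.Prime]

private theorem teich_mul_aux₁ {R : Type*} [CommRing R] [Invertible (p : R)]
    (a : R) (x : WittVector p R) :
    teichmuller p a * x = WittVector.mk p fun m => a ^ p ^ m * x.coeff m := by
  apply (WittVector.ghostMap.bijective_of_invertible p R).1
  ext1 m
  rw [RingHom.map_mul, Pi.mul_apply, ghostMap_apply, ghostComponent_teichmuller,
    ghostMap_apply, ghostMap_apply, ghostComponent_apply, ghostComponent_apply,
    aeval_wittPolynomial, aeval_wittPolynomial, Finset.mul_sum]
  refine Finset.sum_congr rfl fun i hi => ?_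
  rw [Finset.mem_range, Nat.lt_succ_iff] at hi
  rw [WittVector.coeff_mk, mul_pow, ← pow_mul, ← pow_add, Nat.add_sub_cancel' hi]
  ring

private theorem teich_mul_aux₂ {R : Type*} (a : MvPolynomial R ℤ)
    (x : WittVector p (MvPolynomial R ℤ)) :
    teichmuller p a * x = WittVector.mk p fun m => a ^ p ^ m * x.coeff m := by
  refine map_injective (MvPolynomial.map (Int.castRingHom ℚ))
    (MvPolynomial.map_injective _ Int.cast_injective) ?_
  rw [RingHom.map_mul, map_teichmuller, teich_mul_aux₁]
  ext m
  rw [WittVector.map_coeff, WittVector.coeff_mk, WittVector.coeff_mk, RingHom.map_mul,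
    RingHom.map_pow, WittVector.map_coeff]

/-- Multiplication by a Teichmüller representative acts coordinatewise. -/
theorem teichmuller_mul_coeff' {R : Type*} [CommRing R] (a : R) (x : WittVector p R) (m : ℕ) :
    (teichmuller p a * x).coeff m = a ^ p ^ m * x.coeff m := by
  let f : MvPolynomial (Option ℕ) ℤ →+* R :=
    (MvPolynomial.aeval fun o : Option ℕ => o.elim a x.coeff).toRingHom
  have key := teich_mul_aux₂ p (MvPolynomial.X (none : Option ℕ))
      (WittVector.mk p fun i => MvPolynomial.X (some i))
  have h2 := congrArg (WittVector.map f) key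
  rw [RingHom.map_mul, map_teichmuller] at h2
  have ha : f (MvPolynomial.X (none : Option ℕ)) = a := by simp [f]
  have hx : WittVector.map f (WittVector.mk p fun i => MvPolynomial.X (some i)) = x := by
    ext i
    rw [WittVector.map_coeff, WittVector.coeff_mk]
    simp [f]
  rw [ha, hx] at h2
  rw [h2, WittVector.map_coeff, WittVector.coeff_mk]
  rw [RingHom.map_mul, RingHom.map_pow, ha, WittVector.coeff_mk]
  simp [f]

end TeichMul

private theorem nsmul_coe_withTop (k : ℕ) (m : ℤ) :
    k • ((m : ℤ) : WithTop ℤ) = ((k * m : ℤ) : WithTop ℤ) := by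
  induction k with
  | zero => simp
  | succ k ih =>
    rw [succ_nsmul, ih, ← WithTop.coe_add]
    congr 1
    push_cast
    ring

private theorem nsmul_top_withTop {k : ℕ} (hk : k ≠ 0) : k • (⊤ : WithTop ℤ) = ⊤ := by
  induction k with
  | zero => exact absurd rfl hk
  | succ k _ =>
    rw [succ_nsmul]
    exact add_top _

/-- The Brylinski filtration `fil_n W_r(K)` on Witt vectors of length `r` over a discrete
valuation field `K`: writing a Witt vector of length `r` as `(f_{r-1}, …, f_0)` (so that the
paper's coordinate `f_i` is the Witt coordinate `coeff (r-1-i)`), it consists of those vectors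
with `p^i · v(f_i) ≥ -n` for all `0 ≤ i ≤ r-1`. -/
def filWitt (p : ℕ) [hp : Fact p.Prime] {K : Type*} [Field K]
    (v : AddValuation K (WithTop ℤ)) (r n : ℕ) : Set (TruncatedWittVector p r K) :=
  {x | ∀ i : Fin r, ((-(n : ℤ) : ℤ) : WithTop ℤ) ≤ (p ^ (r - 1 - (i : ℕ))) • v (x.coeff i)}

/-- For a discrete valuation field `K` of characteristic `p > 0` and `n ∈ ℕ`, the set
`fil_n W_r(K) = {(f_{r-1},…,f_0) : v(f_i) ≥ -n/p^i}` is a subgroup of the additive group of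
Witt vectors of length `r` over `K`. -/
theorem filWitt_isAddSubgroup (p : ℕ) [hp : Fact p.Prime] (K : Type*) [Field K] [CharP K p]
    (v : AddValuation K (WithTop ℤ)) (hdisc : Function.Surjective v) (r n : ℕ) :
    ∃ H : AddSubgroup (TruncatedWittVector p r K), (H : Set (TruncatedWittVector p r K)) =
      filWitt p v r n := by
  classical
  obtain ⟨t, ht⟩ := hdisc (((1 : ℤ) : WithTop ℤ))
  -- the ring of integers of `v`
  let O : Subring K :=
    { carrier := {a : K | (0 : WithTop ℤ) ≤ v a}
      one_mem' := by simp [AddValuation.map_one]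
      mul_mem' := by
        intro a b ha hb
        show (0 : WithTop ℤ) ≤ v (a * b)
        rw [AddValuation.map_mul]
        exact add_nonneg ha hb
      zero_mem' := by
        show (0 : WithTop ℤ) ≤ v 0
        rw [AddValuation.map_zero]; exact le_top
      add_mem' := by
        intro a b ha hb
        exact le_trans (le_min ha hb) (v.map_add a b)
      neg_mem' := by
        intro a ha
        show (0 : WithTop ℤ) ≤ v (-a)
        rw [AddValuation.map_neg]
        exact ha }
  -- the additive subgroup of truncated Witt vectors with integral coefficients
  let χ : WittVector p O →+* TruncatedWittVector p r K :=
    (WittVector.truncate r).comp (WittVector.map O.subtype)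
  let M : AddSubgroup (TruncatedWittVector p r K) := χ.toAddMonoidHom.range
  have hM : ∀ y : TruncatedWittVector p r K,
      y ∈ M ↔ ∀ i : Fin r, (0 : WithTop ℤ) ≤ v (y.coeff i) := by
    intro y
    constructor
    · rintro ⟨z, rfl⟩ i
      have : (χ z).coeff i = ((z.coeff (i : ℕ) : O) : K) := by
        show ((WittVector.truncate r) ((WittVector.map O.subtype) z)).coeff i = _
        rw [WittVector.coeff_truncate, WittVector.map_coeff]
        rfl
      show (0 : WithTop ℤ) ≤ v ((χ z).coeff i)
      rw [this]
      exact (z.coeff (i : ℕ)).2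
    · intro h
      refine ⟨WittVector.mk p (fun j => if hj : j < r then ⟨y.coeff ⟨j, hj⟩, h ⟨j, hj⟩⟩ else 0), ?_⟩
      apply TruncatedWittVector.ext
      intro i
      show ((WittVector.truncate r) ((WittVector.map O.subtype) _)).coeff i = _
      rw [WittVector.coeff_truncate, WittVector.map_coeff, WittVector.coeff_mk]
      simp [i.is_lt]
  -- the additive map x ↦ truncate ([t^n] * F^(r-1) x)
  let Θ : WittVector p K →+ TruncatedWittVector p r K :=
    (WittVector.truncate r).toAddMonoidHom.comp
      ((AddMonoidHom.mulLeft (teichmuller p (t ^ n) : WittVector p K)).comp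
        (WittVector.map (iterateFrobenius K p (r - 1))).toAddMonoidHom)
  have hΘ : ∀ (x : WittVector p K) (i : Fin r),
      (Θ x).coeff i = (t ^ n) ^ p ^ (i : ℕ) * x.coeff (i : ℕ) ^ p ^ (r - 1) := by
    intro x i
    show ((WittVector.truncate r)
        (teichmuller p (t ^ n) * WittVector.map (iterateFrobenius K p (r - 1)) x)).coeff i = _
    rw [WittVector.coeff_truncate, teichmuller_mul_coeff', WittVector.map_coeff,
      iterateFrobenius_def]
  -- the key coordinatewise arithmetic equivalence
  have key : ∀ (w : K) (i : Fin r),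
      ((0 : WithTop ℤ) ≤ v ((t ^ n) ^ p ^ (i : ℕ) * w ^ p ^ (r - 1))) ↔
        ((-(n : ℤ) : ℤ) : WithTop ℤ) ≤ (p ^ (r - 1 - (i : ℕ))) • v w := by
    intro w i
    have hir : (i : ℕ) ≤ r - 1 := Nat.le_sub_one_of_lt i.is_lt
    have hvc : v ((t ^ n) ^ p ^ (i : ℕ)) = (((n * p ^ (i : ℕ) : ℕ) : ℤ) : WithTop ℤ) := by
      rw [← pow_mul, AddValuation.map_pow, ht, nsmul_coe_withTop, mul_one]
    rcases eq_or_ne w 0 with rfl | hw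
    · have h1 : (0 : K) ^ p ^ (r - 1) = 0 := zero_pow (pow_ne_zero _ hp.1.ne_zero)
      rw [h1, mul_zero]
      have h2 : v (0 : K) = ⊤ := AddValuation.map_zero v
      rw [h2, nsmul_top_withTop (pow_ne_zero _ hp.1.ne_zero)]
      simp
    · obtain ⟨m, hm⟩ := WithTop.ne_top_iff_exists.mp ((v.ne_top_iff).mpr hw)
      rw [AddValuation.map_mul, hvc, AddValuation.map_pow, ← hm, nsmul_coe_withTop,
        nsmul_coe_withTop, ← WithTop.coe_add, ← WithTop.coe_zero, WithTop.coe_le_coe,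
        WithTop.coe_le_coe]
      have hA : (0 : ℤ) < (p : ℤ) ^ (i : ℕ) := pow_pos (by exact_mod_cast hp.1.pos) _
      have hAB : ((p : ℤ) ^ (i : ℕ)) * ((p : ℤ) ^ (r - 1 - (i : ℕ))) = (p : ℤ) ^ (r - 1) := by
        rw [← pow_add, Nat.add_sub_cancel' hir]
      have hid : (p : ℤ) ^ (i : ℕ) * ((n : ℤ) + (p : ℤ) ^ (r - 1 - (i : ℕ)) * m) =
          (n : ℤ) * (p : ℤ) ^ (i : ℕ) + (p : ℤ) ^ (r - 1) * m := by
        rw [mul_add, ← mul_assoc, hAB]; ring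
      push_cast
      constructor
      · intro h
        have h3 : (0 : ℤ) ≤ (p : ℤ) ^ (i : ℕ) * ((n : ℤ) + (p : ℤ) ^ (r - 1 - (i : ℕ)) * m) := by
          rw [hid]; linarith
        have h4 : (0 : ℤ) ≤ (n : ℤ) + (p : ℤ) ^ (r - 1 - (i : ℕ)) * m := by
          nlinarith [h3, hA]
        linarith
      · intro h
        have h' : (0 : ℤ) ≤ (n : ℤ) + (p : ℤ) ^ (r - 1 - (i : ℕ)) * m := by linarith
        have h2 : (0 : ℤ) ≤ (p : ℤ) ^ (i : ℕ) * ((n : ℤ) + (p : ℤ) ^ (r - 1 - (i : ℕ)) * m) :=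
          mul_nonneg hA.le h'
        rw [hid] at h2
        linarith
  refine ⟨AddSubgroup.map (WittVector.truncate r).toAddMonoidHom (AddSubgroup.comap Θ M), ?_⟩
  ext y
  simp only [AddSubgroup.coe_map, Set.mem_image, SetLike.mem_coe, AddSubgroup.mem_comap]
  constructor
  · rintro ⟨x, hx, rfl⟩
    intro i
    have := (hM (Θ x)).mp hx i
    rw [hΘ] at this
    have h2 := (key (x.coeff (i : ℕ)) i).mp this
    show ((-(n : ℤ) : ℤ) : WithTop ℤ) ≤
      (p ^ (r - 1 - (i : ℕ))) • v (((WittVector.truncate r).toAddMonoidHom x).coeff i)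
    have h3 : ((WittVector.truncate r).toAddMonoidHom x).coeff i = x.coeff (i : ℕ) :=
      WittVector.coeff_truncate x i
    rw [h3]
    exact h2
  · intro hy
    refine ⟨y.out, ?_, ?_⟩
    · rw [hM]
      intro i
      rw [hΘ, key]
      have h3 : y.out.coeff (i : ℕ) = y.coeff i := TruncatedWittVector.coeff_out y i
      rw [h3]
      exact hy i
    · show (WittVector.truncate r) y.out = y
      exact TruncatedWittVector.truncateFun_out y
end

section
/- For a field K of characteristic p > 0, the map δ : W_r(K) → Ω_{K/k} sending (f_{r-1},…,f_0) to ∑_{i=0}^{r-1} f_i^{p^i - 1} df_i is a homomorphism of additive groups. -/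
open Finset MvPolynomial WittVector

section Universal

variable (p : ℕ) [Fact p.Prime]

local notation "𝔸" => MvPolynomial (Fin 2 × ℕ) ℤ
local notation "dd" => KaehlerDifferential.D ℤ (MvPolynomial (Fin 2 × ℕ) ℤ)

/-- The universal identity over `ℤ[X_{b,i}]`: the δ-sum of the Witt addition polynomials
equals the sum of the δ-sums of the two families of variables. -/
theorem wittDelta_aux (n : ℕ) :
    (∑ i ∈ Finset.range (n + 1), (wittAdd p i) ^ (p ^ (n - i) - 1) • dd (wittAdd p i))
      = (∑ i ∈ Finset.range (n + 1),
            (X ((0 : Fin 2), i) : 𝔸) ^ (p ^ (n - i) - 1) • dd (X ((0 : Fin 2), i)))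
        + ∑ i ∈ Finset.range (n + 1),
            (X ((1 : Fin 2), i) : 𝔸) ^ (p ^ (n - i) - 1) • dd (X ((1 : Fin 2), i)) := by
  -- `p ^ n • ·` is injective on the module of differentials
  have cancel : ∀ a b : Ω[(MvPolynomial (Fin 2 × ℕ) ℤ)⁄ℤ],
      (p ^ n : ℕ) • a = (p ^ n : ℕ) • b → a = b := by
    intro a b h
    have hp : ((p ^ n : ℕ) : 𝔸) ≠ 0 :=
      Nat.cast_ne_zero.mpr (pow_ne_zero n (Fact.out : p.Prime).ne_zero)
    apply (KaehlerDifferential.mvPolynomialBasis ℤ (Fin 2 × ℕ)).repr.injective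
    refine Finsupp.ext fun v => ?_
    have h2 := congrArg
      (fun ω => (KaehlerDifferential.mvPolynomialBasis ℤ (Fin 2 × ℕ)).repr ω v) h
    simp only [map_nsmul, Finsupp.smul_apply, nsmul_eq_mul] at h2
    exact mul_left_cancel₀ hp h2
  -- `D` of one ghost term
  have term : ∀ (i : ℕ), i ≤ n → ∀ (f : 𝔸),
      dd ((p : 𝔸) ^ i * f ^ p ^ (n - i)) = (p ^ n : ℕ) • (f ^ (p ^ (n - i) - 1) • dd f) := by
    intro i hi f
    have hc : ((p : 𝔸) ^ i) = algebraMap ℤ 𝔸 ((p : ℤ) ^ i) := by push_cast; ring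
    rw [Derivation.leibniz, hc, Derivation.map_algebraMap, smul_zero, add_zero,
      Derivation.leibniz_pow, ← hc, smul_comm, smul_smul]
    simp only [smul_eq_mul, ← Nat.cast_smul_eq_nsmul 𝔸, smul_smul]
    congr 1
    have hpow : (p : 𝔸) ^ (n - i) * (p : 𝔸) ^ i = (p : 𝔸) ^ n := by
      rw [← pow_add]; congr 1; omega
    push_cast
    rw [← hpow]; ring
  -- additivity of the ghost components on the Witt addition polynomials
  have ghost : ∑ i ∈ Finset.range (n + 1), (p : 𝔸) ^ i * (wittAdd p i) ^ p ^ (n - i) =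
      (∑ i ∈ Finset.range (n + 1), (p : 𝔸) ^ i * (X ((0 : Fin 2), i)) ^ p ^ (n - i)) +
        ∑ i ∈ Finset.range (n + 1), (p : 𝔸) ^ i * (X ((1 : Fin 2), i)) ^ p ^ (n - i) := by
    have h := wittStructureInt_prop p (X 0 + X 1 : MvPolynomial (Fin 2) ℤ) n
    rw [map_add, bind₁_X_right, bind₁_X_right] at h
    have hl : bind₁ (wittStructureInt p (X 0 + X 1 : MvPolynomial (Fin 2) ℤ))
        (wittPolynomial p ℤ n) = aeval (wittAdd p) (wittPolynomial p ℤ n) := rfl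
    have hr : ∀ b : Fin 2, rename (Prod.mk b) (wittPolynomial p ℤ n)
        = aeval (fun i => (X (b, i) : 𝔸)) (wittPolynomial p ℤ n) := by
      intro b
      rw [← aeval_X_left_apply (rename (Prod.mk b) (wittPolynomial p ℤ n)), aeval_rename]
      rfl
    rw [hl, hr 0, hr 1, aeval_wittPolynomial, aeval_wittPolynomial, aeval_wittPolynomial] at h
    exact h
  apply cancel
  have e : ∀ f : ℕ → 𝔸,
      (p ^ n : ℕ) • (∑ i ∈ Finset.range (n + 1), (f i) ^ (p ^ (n - i) - 1) • dd (f i))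
        = dd (∑ i ∈ Finset.range (n + 1), (p : 𝔸) ^ i * (f i) ^ p ^ (n - i)) := by
    intro f
    rw [map_sum, smul_sum]
    exact Finset.sum_congr rfl fun i hi =>
      (term i (Nat.lt_succ_iff.mp (Finset.mem_range.mp hi)) (f i)).symm
  rw [smul_add, e (wittAdd p), e (fun i => X ((0 : Fin 2), i)), e (fun i => X ((1 : Fin 2), i)),
    ← map_add, ghost]

end Universal

/-- The map `δ : W_r(K) → Ω_{K/k}` sending `(f_{r-1},…,f_0)` to
`∑_{i=0}^{r-1} f_i^{p^i - 1} d f_i`; in Witt coordinates (with `f_i = coeff (r-1-i)`) this is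
`∑_{j} (coeff j)^(p^(r-1-j) - 1) • d(coeff j)`. -/
noncomputable def wittDelta (p : ℕ) [Fact p.Prime] (k K : Type*) [Field k] [Field K]
    [Algebra k K] {r : ℕ} (x : TruncatedWittVector p r K) : KaehlerDifferential k K :=
  ∑ j : Fin r,
    (x.coeff j) ^ (p ^ (r - 1 - (j : ℕ)) - 1) • KaehlerDifferential.D k K (x.coeff j)

/-- For a field `K` of characteristic `p > 0` over a perfect field `k`, the map
`δ : W_r(K) → Ω_{K/k}`, `(f_{r-1},…,f_0) ↦ ∑_{i=0}^{r-1} f_i^{p^i-1} df_i`, is a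
homomorphism of additive groups. -/
theorem wittDelta_add (p : ℕ) [Fact p.Prime] (k K : Type*) [Field k] [Field K]
    [Algebra k K] [CharP k p] [PerfectRing k p] [CharP K p] (r : ℕ)
    (x y : TruncatedWittVector p r K) :
    wittDelta p k K (x + y) = wittDelta p k K x + wittDelta p k K y := by
  rcases r with _ | n
  · simp [wittDelta]
  classical
  -- rewrite `wittDelta` as a sum over `range (n+1)` of coefficients of full Witt vectors
  have hdelta : ∀ (z : TruncatedWittVector p (n + 1) K) (w : WittVector p K),
      (∀ j : Fin (n + 1), z.coeff j = w.coeff j) →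
      wittDelta p k K z = ∑ i ∈ Finset.range (n + 1),
        (w.coeff i) ^ (p ^ (n - i) - 1) • KaehlerDifferential.D k K (w.coeff i) := by
    intro z w hzw
    rw [wittDelta, ← Fin.sum_univ_eq_sum_range
      (fun i => (w.coeff i) ^ (p ^ (n - i) - 1) • KaehlerDifferential.D k K (w.coeff i))]
    refine Finset.sum_congr rfl fun j _ => by rw [hzw j, Nat.add_sub_cancel]
  -- the evaluation point and the induced algebra structure
  letI : Algebra (MvPolynomial (Fin 2 × ℕ) ℤ) K :=
    (MvPolynomial.aeval (Function.uncurry ![x.out.coeff, y.out.coeff])).toRingHom.toAlgebra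
  haveI : IsScalarTower ℤ (MvPolynomial (Fin 2 × ℕ) ℤ) K :=
    IsScalarTower.of_algebraMap_eq' (Subsingleton.elim _ _)
  haveI : IsScalarTower ℤ k K := IsScalarTower.of_algebraMap_eq' (Subsingleton.elim _ _)
  haveI : SMulCommClass k (MvPolynomial (Fin 2 × ℕ) ℤ) K :=
    ⟨fun a b m => by simp only [Algebra.smul_def]; ring⟩
  let L := KaehlerDifferential.map ℤ k (MvPolynomial (Fin 2 × ℕ) ℤ) K
  have hL : ∀ (f : MvPolynomial (Fin 2 × ℕ) ℤ) (e : ℕ),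
      L (f ^ e • KaehlerDifferential.D ℤ (MvPolynomial (Fin 2 × ℕ) ℤ) f)
        = (aeval (Function.uncurry ![x.out.coeff, y.out.coeff]) f) ^ e •
            KaehlerDifferential.D k K
              (aeval (Function.uncurry ![x.out.coeff, y.out.coeff]) f) := by
    intro f e
    rw [map_smul, KaehlerDifferential.map_D, ← algebraMap_smul K (f ^ e), map_pow]
    rfl
  have key := congrArg L (wittDelta_aux p n)
  simp only [map_add, map_sum, hL] at key
  have hW : ∀ i : ℕ, aeval (Function.uncurry ![x.out.coeff, y.out.coeff]) (wittAdd p i)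
      = (x.out + y.out).coeff i := by
    intro i
    rw [WittVector.add_coeff, peval]
  have hX0 : ∀ i : ℕ,
      aeval (Function.uncurry ![x.out.coeff, y.out.coeff])
          (X ((0 : Fin 2), i) : MvPolynomial (Fin 2 × ℕ) ℤ)
        = x.out.coeff i := by
    intro i; simp [Function.uncurry]
  have hX1 : ∀ i : ℕ,
      aeval (Function.uncurry ![x.out.coeff, y.out.coeff])
          (X ((1 : Fin 2), i) : MvPolynomial (Fin 2 × ℕ) ℤ)
        = y.out.coeff i := by
    intro i; simp [Function.uncurry]
  simp only [hW, hX0, hX1] at key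
  rw [hdelta (x + y) (x.out + y.out) (fun j => by
      rw [show x + y = WittVector.truncateFun (n + 1) (x.out + y.out) from rfl,
        WittVector.coeff_truncateFun]),
    hdelta x x.out (fun j => (TruncatedWittVector.coeff_out x j).symm),
    hdelta y y.out (fun j => (TruncatedWittVector.coeff_out y j).symm)]
  exact key
end

section
/- Let C be a smooth proper curve over an algebraically closed field k, S a finite set of closed points, D = ∑_{q∈S} n_q·q an effective divisor with all n_q ≥ 1. Then the group of divisors of degree 0 supported away from S that are of the form div(f) with f ∈ O_{C,q}^× for all q ∈ S, modulo divisors div(f) with v_q(1-f) ≥ n_q for all q ∈ S, is isomorphic to ((∏_{q∈S} k(q)^×)/k^×) × ∏_{q∈S} (1+m_q)/(1+m_q^{n_q}). -/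
open Function

private lemma gjap_one_le {a : WithTop ℤ} (h : 0 < a) : ((1:ℤ) : WithTop ℤ) ≤ a := by
  rcases eq_or_ne a ⊤ with rfl | h2
  · exact le_top
  · lift a to ℤ using h2; exact_mod_cast h


private lemma gjap_smul_coe (m : ℕ) (a : ℤ) :
    m • ((a : ℤ) : WithTop ℤ) = ((m * a : ℤ) : WithTop ℤ) := by
  push_cast [nsmul_eq_mul]; rfl

private lemma gjap_neg_coe (a : ℤ) : -((a : ℤ) : WithTop ℤ) = ((-a : ℤ) : WithTop ℤ) := by
  push_cast; ring_nf

private lemma gjap_eq_of_mono {K : Type} [Field K] (v₁ v₂ : AddValuation K (WithTop ℤ))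
    (h1 : Surjective v₁) (h2 : Surjective v₂)
    (hm : ∀ x : K, 0 < v₁ x → 0 < v₂ x) : v₁ = v₂ := by
  obtain ⟨π, hπ⟩ := h1 ((1:ℤ) : WithTop ℤ)
  have hπ0 : π ≠ 0 := by
    intro h; rw [h, AddValuation.map_zero] at hπ; exact (by simp : ((1:ℤ):WithTop ℤ) ≠ ⊤) hπ.symm
  have hπ2 : v₂ π ≠ ⊤ := v₂.ne_top_iff.mpr hπ0
  obtain ⟨b, hb⟩ : ∃ b : ℤ, v₂ π = (b : WithTop ℤ) := by
    lift v₂ π to ℤ using hπ2 with b; exact ⟨b, rfl⟩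
  -- nonneg preservation
  have key0 : ∀ x : K, v₁ x = 0 → 0 ≤ v₂ x := by
    intro x hx
    by_contra hneg
    push_neg at hneg
    have hx0 : x ≠ 0 := by
      intro h; rw [h, AddValuation.map_zero] at hx; simp at hx
    obtain ⟨a, ha⟩ : ∃ a : ℤ, v₂ x = (a : WithTop ℤ) := by
      lift v₂ x to ℤ using (v₂.ne_top_iff.mpr hx0) with a; exact ⟨a, rfl⟩
    have ha' : a < 0 := by rw [ha] at hneg; exact_mod_cast hneg
    have hkey : ∀ m : ℕ, 0 < v₂ (x ^ m * π) := by
      intro m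
      apply hm
      rw [AddValuation.map_mul, AddValuation.map_pow, hx, hπ, smul_zero, zero_add]
      exact_mod_cast Int.zero_lt_one
    have := hkey (b.toNat + 1)
    rw [AddValuation.map_mul, AddValuation.map_pow, ha, hb] at this
    rw [gjap_smul_coe] at this
    have hlt2 : (0:ℤ) < (b.toNat + 1 : ℕ) * a + b := by exact_mod_cast this
    have hb' : (b : ℤ) ≤ b.toNat := Int.self_le_toNat b
    have hb'' : (0:ℤ) ≤ (b.toNat : ℤ) := Int.natCast_nonneg _
    push_cast at hlt2
    nlinarith
  have key1 : ∀ x : K, v₁ x = 0 → v₂ x = 0 := by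
    intro x hx
    have hx0 : x ≠ 0 := by intro h; rw [h, AddValuation.map_zero] at hx; simp at hx
    have h1' := key0 x hx
    have hxinv : v₁ x⁻¹ = 0 := by rw [AddValuation.map_inv, hx, neg_zero]
    have h2' := key0 _ hxinv
    rw [AddValuation.map_inv] at h2'
    obtain ⟨a, ha⟩ : ∃ a : ℤ, v₂ x = (a : WithTop ℤ) := by
      lift v₂ x to ℤ using (v₂.ne_top_iff.mpr hx0) with a; exact ⟨a, rfl⟩
    rw [ha] at h1' h2' ⊢
    have h1'' : (0:ℤ) ≤ a := by exact_mod_cast h1'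
    have h2'' : (0:ℤ) ≤ -a := by
      have : -((a:ℤ) : WithTop ℤ) = ((-a : ℤ) : WithTop ℤ) := by push_cast; ring_nf
      rw [this] at h2'; exact_mod_cast h2'
    have : a = 0 := by omega
    exact_mod_cast congrArg (fun z : ℤ => (z : WithTop ℤ)) this
  have hb1 : 1 ≤ b := by
    have : 0 < v₂ π := hm π (by rw [hπ]; exact_mod_cast Int.zero_lt_one)
    rw [hb] at this; exact_mod_cast this
  -- scaling: for x ≠ 0 with v₁ x = a, v₂ x = a * b
  have scale : ∀ (x : K) (a : ℤ), x ≠ 0 → v₁ x = (a : WithTop ℤ) → v₂ x = ((a * b : ℤ) : WithTop ℤ) := by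
    intro x a hx0 hxa
    obtain ⟨c, hc⟩ : ∃ c : ℤ, v₂ x = (c : WithTop ℤ) := by
      lift v₂ x to ℤ using (v₂.ne_top_iff.mpr hx0) with c; exact ⟨c, rfl⟩
    rcases le_or_gt 0 a with hge | hlt
    · set z := x * (π ^ a.toNat)⁻¹ with hz
      have hz1 : v₁ z = 0 := by
        rw [hz, AddValuation.map_mul, AddValuation.map_inv, AddValuation.map_pow, hxa, hπ]
        rw [gjap_smul_coe, gjap_neg_coe]
        have h' : a + -(a.toNat * 1) = 0 := by
          rw [Int.toNat_of_nonneg hge]; ring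
        exact_mod_cast h' 
      have hz2 := key1 z hz1
      rw [hz, AddValuation.map_mul, AddValuation.map_inv, AddValuation.map_pow, hc, hb] at hz2
      rw [gjap_smul_coe, gjap_neg_coe] at hz2
      have h' : c + -(a.toNat * b) = 0 := by exact_mod_cast hz2
      rw [Int.toNat_of_nonneg hge] at h'
      rw [hc]; congr 1; omega
    · set z := x * π ^ (-a).toNat with hz
      have hz1 : v₁ z = 0 := by
        rw [hz, AddValuation.map_mul, AddValuation.map_pow, hxa, hπ]
        rw [gjap_smul_coe]
        have h' : a + ((-a).toNat * 1) = 0 := by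
          rw [Int.toNat_of_nonneg (by omega : (0:ℤ) ≤ -a)]; ring
        exact_mod_cast h' 
      have hz2 := key1 z hz1
      rw [hz, AddValuation.map_mul, AddValuation.map_pow, hc, hb] at hz2
      rw [gjap_smul_coe] at hz2
      have h' : c + ((-a).toNat * b) = 0 := by exact_mod_cast hz2
      rw [Int.toNat_of_nonneg (by omega : (0:ℤ) ≤ -a)] at h'
      rw [hc]; congr 1; nlinarith
  -- b = 1
  have hbeq : b = 1 := by
    obtain ⟨y, hy⟩ := h2 ((1:ℤ) : WithTop ℤ)
    have hy0 : y ≠ 0 := by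
      intro h; rw [h, AddValuation.map_zero] at hy; exact (by simp : ((1:ℤ):WithTop ℤ) ≠ ⊤) hy.symm
    obtain ⟨a, ha⟩ : ∃ a : ℤ, v₁ y = (a : WithTop ℤ) := by
      lift v₁ y to ℤ using (v₁.ne_top_iff.mpr hy0) with a; exact ⟨a, rfl⟩
    have := scale y a hy0 ha
    rw [hy] at this
    have hab : a * b = 1 := by exact_mod_cast this.symm
    have hdvd : b ∣ 1 := ⟨a, by rw [← hab]; ring⟩
    rcases Int.isUnit_iff.mp (isUnit_of_dvd_one hdvd) with h | h
    · exact h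
    · omega
  ext x
  rcases eq_or_ne x 0 with rfl | hx0
  · rw [AddValuation.map_zero, AddValuation.map_zero]
  · obtain ⟨a, ha⟩ : ∃ a : ℤ, v₁ x = (a : WithTop ℤ) := by
      lift v₁ x to ℤ using (v₁.ne_top_iff.mpr hx0) with a; exact ⟨a, rfl⟩
    rw [ha, scale x a hx0 ha, hbeq, mul_one]

private lemma gjap_sub_coe (a b : ℤ) :
    ((a : ℤ) : WithTop ℤ) - ((b : ℤ) : WithTop ℤ) = ((a - b : ℤ) : WithTop ℤ) := by
  push_cast; ring_nf

private lemma gjap_int {K : Type} [Field K] (v : AddValuation K (WithTop ℤ)) {x : K}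
    (hx : x ≠ 0) : ∃ a : ℤ, v x = (a : WithTop ℤ) := by
  lift v x to ℤ using v.ne_top_iff.mpr hx with a; exact ⟨a, rfl⟩

private lemma gjap_ne_zero {K : Type} [Field K] {v : AddValuation K (WithTop ℤ)} {x : K}
    (hx : v x ≠ ⊤) : x ≠ 0 := fun h => hx (by rw [h, AddValuation.map_zero])

private lemma gjap_pair {K : Type} [Field K] (v₁ v₂ : AddValuation K (WithTop ℤ))
    (h1 : Function.Surjective v₁) (h2 : Function.Surjective v₂) (hne : v₁ ≠ v₂) :
    ∃ x : K, v₁ x < 0 ∧ 0 < v₂ x := by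
  have H1 : ¬ ∀ x : K, 0 < v₁ x → 0 < v₂ x := fun h => hne (gjap_eq_of_mono _ _ h1 h2 h)
  have H2 : ¬ ∀ x : K, 0 < v₂ x → 0 < v₁ x := fun h => hne (gjap_eq_of_mono _ _ h2 h1 h).symm
  push_neg at H1 H2
  obtain ⟨x, hx1, hx2⟩ := H1
  obtain ⟨y, hy1, hy2⟩ := H2
  have hx0 : x ≠ 0 := gjap_ne_zero (fun h => by rw [h] at hx2; exact (not_le.mpr (lt_top_iff_ne_top.mpr (by simp))) hx2)
  have hy0 : y ≠ 0 := gjap_ne_zero (fun h => by rw [h] at hy2; exact (not_le.mpr (lt_top_iff_ne_top.mpr (by simp))) hy2)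
  obtain ⟨a1, ha1⟩ := gjap_int v₁ hy0
  obtain ⟨a2, ha2⟩ := gjap_int v₁ hx0
  obtain ⟨b1, hb1⟩ := gjap_int v₂ hy0
  obtain ⟨b2, hb2⟩ := gjap_int v₂ hx0
  have ha1' : a1 ≤ 0 := by rw [ha1] at hy2; exact_mod_cast hy2
  have ha2' : 0 < a2 := by rw [ha2] at hx1; exact_mod_cast hx1
  have hb1' : 0 < b1 := by rw [hb1] at hy1; exact_mod_cast hy1
  have hb2' : b2 ≤ 0 := by rw [hb2] at hx2; exact_mod_cast hx2
  refine ⟨y / x, ?_, ?_⟩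
  · rw [v₁.map_div, ha1, ha2, gjap_sub_coe]
    exact_mod_cast (by omega : a1 - a2 < 0)
  · rw [v₂.map_div, hb1, hb2, gjap_sub_coe]
    exact_mod_cast (by omega : (0:ℤ) < b1 - b2)

private lemma gjap_sep {K ι : Type} [Field K] (v : ι → AddValuation K (WithTop ℤ))
    (hsurj : ∀ q, Function.Surjective (v q)) (hdist : ∀ q q', v q = v q' → q = q')
    (q : ι) (T : Finset ι) (hq : q ∉ T) :
    ∃ z : K, v q z < 0 ∧ ∀ j ∈ T, 0 < v j z := by
  classical
  induction T using Finset.induction_on with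
  | empty =>
      obtain ⟨z, hz⟩ := hsurj q ((-1 : ℤ) : WithTop ℤ)
      refine ⟨z, by rw [hz]; exact_mod_cast (by norm_num : (-1:ℤ) < 0), by simp⟩
  | @insert t T htT ih =>
      have hqT : q ∉ T := fun h => hq (Finset.mem_insert_of_mem h)
      have hqt : q ≠ t := fun h => hq (h ▸ Finset.mem_insert_self t T)
      obtain ⟨z, hz1, hz2⟩ := ih hqT
      obtain ⟨w, hw1, hw2⟩ := gjap_pair (v q) (v t) (hsurj q) (hsurj t)
        (fun h => hqt (hdist _ _ h))
      have hz0 : z ≠ 0 := gjap_ne_zero (hz1.trans_le le_top).ne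
      have hw0 : w ≠ 0 := gjap_ne_zero (hw1.trans_le le_top).ne
      obtain ⟨aq, haq⟩ := gjap_int (v q) hz0
      have haq' : aq < 0 := by rw [haq] at hz1; exact_mod_cast hz1
      obtain ⟨cq, hcq⟩ := gjap_int (v q) hw0
      have hcq' : cq < 0 := by rw [hcq] at hw1; exact_mod_cast hw1
      obtain ⟨ct, hct⟩ := gjap_int (v t) hw0
      have hct' : 0 < ct := by rw [hct] at hw2; exact_mod_cast hw2
      set m : ℕ := (T.sup fun j => (-(WithTop.untopD 0 (v j w))).toNat) + 1 with hm
      have hm1 : 1 ≤ m := Nat.le_add_left 1 _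
      have hmkey : ∀ j ∈ T, ∀ aj cj : ℤ, v j z = (aj : WithTop ℤ) → v j w = (cj : WithTop ℤ) →
          0 < (m : ℤ) * aj + cj := by
        intro j hj aj cj haj hcj
        have h1 : 1 ≤ aj := by
          have := hz2 j hj; rw [haj] at this; exact_mod_cast this
        have h2 : (-cj).toNat ≤ T.sup fun j => (-(WithTop.untopD 0 (v j w))).toNat := by
          simpa only [hcj, WithTop.untopD_coe] using
            Finset.le_sup (f := fun j => (-(WithTop.untopD 0 (v j w))).toNat) hj
        have h3 : -cj ≤ ((-cj).toNat : ℤ) := Int.self_le_toNat _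
        have h4 : ((-cj).toNat : ℤ) ≤ ((T.sup fun j => (-(WithTop.untopD 0 (v j w))).toNat : ℕ) : ℤ) :=
          Int.ofNat_le.mpr h2
        have h5 : (m : ℤ) = ((T.sup fun j => (-(WithTop.untopD 0 (v j w))).toNat : ℕ) : ℤ) + 1 := by
          rw [hm]; push_cast; ring
        nlinarith
      rcases lt_trichotomy (v t z) 0 with hlt | heq | hgt
      · -- use (z^m / (1 + z^m)) * w
        obtain ⟨at', hat⟩ := gjap_int (v t) hz0
        have hat' : at' < 0 := by rw [hat] at hlt; exact_mod_cast hlt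
        set u := (z ^ m / (1 + z ^ m)) * w with hu
        have hfrac : ∀ (i : ι) (ai : ℤ), v i z = (ai : WithTop ℤ) → ai < 0 →
            v i (z ^ m / (1 + z ^ m)) = 0 := by
          intro i ai hai hai'
          have hpow : v i (z ^ m) = ((m * ai : ℤ) : WithTop ℤ) := by
            rw [AddValuation.map_pow, hai, gjap_smul_coe]
          have hlt1 : v i (z ^ m) < v i 1 := by
            rw [hpow, AddValuation.map_one]
            exact_mod_cast (by nlinarith [(by exact_mod_cast hm1 : (1:ℤ) ≤ (m:ℤ))] : (m:ℤ) * ai < 0)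
          have hone : v i (1 + z ^ m) = ((m * ai : ℤ) : WithTop ℤ) := by
            rw [AddValuation.map_add_eq_of_lt_right _ hlt1, hpow]
          rw [AddValuation.map_div, hpow, hone, gjap_sub_coe]
          exact_mod_cast (by ring : m * ai - m * ai = 0)
        refine ⟨u, ?_, ?_⟩
        · rw [hu, AddValuation.map_mul, hfrac q aq haq haq', zero_add, hcq]
          exact_mod_cast hcq'
        · intro j hj
          rcases Finset.mem_insert.mp hj with rfl | hjT
          · rw [hu, AddValuation.map_mul, hfrac j at' hat hat', zero_add, hct]
            exact_mod_cast hct'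
          · obtain ⟨aj, haj⟩ := gjap_int (v j) hz0
            obtain ⟨cj, hcj⟩ := gjap_int (v j) hw0
            have h1 : 1 ≤ aj := by
              have := hz2 j hjT; rw [haj] at this; exact_mod_cast this
            have hpow : v j (z ^ m) = ((m * aj : ℤ) : WithTop ℤ) := by
              rw [AddValuation.map_pow, haj, gjap_smul_coe]
            have hgt1 : v j 1 < v j (z ^ m) := by
              rw [hpow, AddValuation.map_one]
              exact_mod_cast (by nlinarith [(by exact_mod_cast hm1 : (1:ℤ) ≤ (m:ℤ))] : (0:ℤ) < (m:ℤ) * aj)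
            have hone : v j (1 + z ^ m) = 0 := by
              rw [AddValuation.map_add_eq_of_lt_left _ hgt1, AddValuation.map_one]
            rw [hu, AddValuation.map_mul, AddValuation.map_div, hpow, hone, sub_zero, hcj]
            have := hmkey j hjT aj cj haj hcj
            calc (0 : WithTop ℤ) < (((m:ℤ) * aj + cj : ℤ) : WithTop ℤ) := by exact_mod_cast this
              _ = _ := by push_cast; ring_nf
      · -- v t z = 0 : use z^m * w
        set u := z ^ m * w with hu
        refine ⟨u, ?_, ?_⟩
        · rw [hu, AddValuation.map_mul, AddValuation.map_pow, haq, hcq, gjap_smul_coe]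
          calc ((( (m:ℤ) * aq : ℤ)) : WithTop ℤ) + ((cq : ℤ) : WithTop ℤ)
              = (((m:ℤ) * aq + cq : ℤ) : WithTop ℤ) := by push_cast; ring_nf
            _ < 0 := by
                exact_mod_cast (by nlinarith [(by exact_mod_cast hm1 : (1:ℤ) ≤ (m:ℤ))] : (m:ℤ) * aq + cq < 0)
        · intro j hj
          rcases Finset.mem_insert.mp hj with rfl | hjT
          · rw [hu, AddValuation.map_mul, AddValuation.map_pow, heq, smul_zero, zero_add, hct]
            exact_mod_cast hct'
          · obtain ⟨aj, haj⟩ := gjap_int (v j) hz0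
            obtain ⟨cj, hcj⟩ := gjap_int (v j) hw0
            rw [hu, AddValuation.map_mul, AddValuation.map_pow, haj, hcj, gjap_smul_coe]
            have := hmkey j hjT aj cj haj hcj
            calc (0 : WithTop ℤ) < (((m:ℤ) * aj + cj : ℤ) : WithTop ℤ) := by exact_mod_cast this
              _ = _ := by push_cast; ring_nf
      · -- 0 < v t z : z works
        exact ⟨z, hz1, fun j hj => by
          rcases Finset.mem_insert.mp hj with rfl | hjT
          · exact hgt
          · exact hz2 j hjT⟩

private lemma gjap_approx {K ι : Type} [Field K] [Fintype ι]
    (v : ι → AddValuation K (WithTop ℤ))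
    (hsurj : ∀ q, Function.Surjective (v q)) (hdist : ∀ q q', v q = v q' → q = q')
    (t : ι → K) (N : ℤ) :
    ∃ f : K, ∀ q, (N : WithTop ℤ) ≤ v q (f - t q) := by
  classical
  -- the indicator-building elements
  have hz : ∀ q : ι, ∃ z : K, v q z < 0 ∧ ∀ j, j ≠ q → 0 < v j z := by
    intro q
    obtain ⟨z, h1, h2⟩ := gjap_sep v hsurj hdist q (Finset.univ.erase q)
      (Finset.notMem_erase q _)
    exact ⟨z, h1, fun j hj => h2 j (Finset.mem_erase.mpr ⟨hj, Finset.mem_univ j⟩)⟩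
  choose z hz1 hz2 using hz
  set m : ℕ := (Finset.univ.sup (fun p : ι × ι => (N - WithTop.untopD 0 ((v p.1) (t p.2))).toNat)) + 1
    with hmdef
  have hm1 : 1 ≤ m := Nat.le_add_left 1 _
  have hmZ : (1:ℤ) ≤ (m:ℤ) := by exact_mod_cast hm1
  have hmbound : ∀ j i : ι, (N : WithTop ℤ) ≤ v j (t i) + ((m : ℤ) : WithTop ℤ) := by
    intro j i
    rcases eq_or_ne (v j (t i)) ⊤ with h | h
    · rw [h, top_add]; exact le_top
    · obtain ⟨c, hc⟩ : ∃ c : ℤ, v j (t i) = (c : WithTop ℤ) := by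
        lift v j (t i) to ℤ using h with c; exact ⟨c, rfl⟩
      have h2 : (N - c).toNat ≤ Finset.univ.sup
          (fun p : ι × ι => (N - WithTop.untopD 0 ((v p.1) (t p.2))).toNat) := by
        simpa only [hc, WithTop.untopD_coe] using Finset.le_sup
          (f := fun p : ι × ι => (N - WithTop.untopD 0 ((v p.1) (t p.2))).toNat)
          (Finset.mem_univ (j, i))
      have h3 : N - c ≤ ((N - c).toNat : ℤ) := Int.self_le_toNat _
      have h4 : ((N - c).toNat : ℤ) ≤ ((Finset.univ.sup
          (fun p : ι × ι => (N - WithTop.untopD 0 ((v p.1) (t p.2))).toNat) : ℕ) : ℤ) := by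
        exact_mod_cast h2
      have h5 : ((m : ℕ) : ℤ) = ((Finset.univ.sup
          (fun p : ι × ι => (N - WithTop.untopD 0 ((v p.1) (t p.2))).toNat) : ℕ) : ℤ) + 1 := by
        rw [hmdef]; push_cast; ring
      have h6 : N ≤ c + (m : ℤ) := by omega
      rw [hc]
      exact_mod_cast h6
  -- the indicators
  set e : ι → K := fun q => z q ^ m / (1 + z q ^ m) with he
  have hint : ∀ q : ι, ∃ a : ℤ, v q (z q) = (a : WithTop ℤ) ∧ a < 0 := by
    intro q
    obtain ⟨a, ha⟩ := gjap_int (v q) (gjap_ne_zero ((hz1 q).trans_le le_top).ne)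
    have h := hz1 q
    rw [ha] at h
    exact ⟨a, ha, by exact_mod_cast h⟩
  have hden : ∀ q : ι, ∃ a : ℤ, v q (1 + z q ^ m) = ((m * a : ℤ) : WithTop ℤ) ∧ a < 0 := by
    intro q
    obtain ⟨a, ha, ha'⟩ := hint q
    have hpow : v q (z q ^ m) = ((m * a : ℤ) : WithTop ℤ) := by
      rw [AddValuation.map_pow, ha, gjap_smul_coe]
    refine ⟨a, ?_, ha'⟩
    rw [AddValuation.map_add_eq_of_lt_right _ (by
      rw [hpow, AddValuation.map_one]
      exact_mod_cast (by nlinarith : (m:ℤ) * a < 0)), hpow]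
  have hden0 : ∀ q : ι, 1 + z q ^ m ≠ 0 := by
    intro q
    obtain ⟨a, ha, _⟩ := hden q
    exact gjap_ne_zero (by rw [ha]; exact WithTop.coe_ne_top)
  -- key estimate 1 : at q, v q (e q - 1) ≥ m
  have hkey1 : ∀ q : ι, ((m : ℤ) : WithTop ℤ) ≤ v q (e q - 1) := by
    intro q
    obtain ⟨a, ha, ha'⟩ := hden q
    have h1 : e q - 1 = (-1) / (1 + z q ^ m) := by
      rw [he]
      show z q ^ m / (1 + z q ^ m) - 1 = (-1) / (1 + z q ^ m)
      rw [div_sub_one (hden0 q)]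
      congr 1
      ring
    have hneg1 : v q ((-1 : K)) = 0 := by
      rw [show ((-1 : K)) = -(1 : K) by ring, AddValuation.map_neg, AddValuation.map_one]
    rw [h1, AddValuation.map_div, hneg1, ha, zero_sub, gjap_neg_coe]
    exact_mod_cast (by nlinarith : (m:ℤ) ≤ -(m * a))
  -- key estimate 2 : at j ≠ q, v j (e q) ≥ m
  have hkey2 : ∀ j q : ι, j ≠ q → ((m : ℤ) : WithTop ℤ) ≤ v j (e q) := by
    intro j q hjq
    obtain ⟨a, ha⟩ := gjap_int (v j) (gjap_ne_zero ((hz1 q).trans_le le_top).ne)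
    have ha' : 1 ≤ a := by
      have := hz2 q j hjq; rw [ha] at this; exact_mod_cast this
    have hpow : v j (z q ^ m) = ((m * a : ℤ) : WithTop ℤ) := by
      rw [AddValuation.map_pow, ha, gjap_smul_coe]
    have hone : v j (1 + z q ^ m) = 0 := by
      rw [AddValuation.map_add_eq_of_lt_left _ (by
        rw [hpow, AddValuation.map_one]
        exact_mod_cast (by nlinarith : (0:ℤ) < (m:ℤ) * a)), AddValuation.map_one]
    rw [he, AddValuation.map_div, hpow, hone, sub_zero]
    exact_mod_cast (by nlinarith : (m:ℤ) ≤ m * a)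
  refine ⟨∑ q, t q * e q, fun j => ?_⟩
  have hsplit : (∑ q, t q * e q) - t j = ∑ q, (t q * e q - if q = j then t q else 0) := by
    rw [Finset.sum_sub_distrib, Finset.sum_ite_eq' Finset.univ j t,
      if_pos (Finset.mem_univ j)]
  rw [hsplit]
  apply AddValuation.map_le_sum
  intro i _
  rcases eq_or_ne i j with rfl | hij
  · rw [if_pos rfl]
    have : t i * e i - t i = t i * (e i - 1) := by ring
    rw [this, AddValuation.map_mul]
    calc ((N : ℤ) : WithTop ℤ) ≤ v i (t i) + ((m : ℤ) : WithTop ℤ) := hmbound i i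
      _ ≤ v i (t i) + v i (e i - 1) := add_le_add_right (hkey1 i) _
  · rw [if_neg hij, sub_zero, AddValuation.map_mul]
    calc ((N : ℤ) : WithTop ℤ) ≤ v j (t i) + ((m : ℤ) : WithTop ℤ) := hmbound j i
      _ ≤ v j (t i) + v j (e i) := add_le_add_right (hkey2 j i (Ne.symm hij)) _

/-- The affine part of the generalized Jacobian with modulus `D = ∑_{q∈S} n_q·q` of a smooth
proper curve `C` over an algebraically closed field `k`.

We encode the situation by the function field `K = K_C` (a field extension of `k`) together
with, for each point `q` of the finite set `S`, the discrete valuation `v q` of `K/k`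
attached to `q` (normalized, i.e. surjective; pairwise distinct; trivial on `k`; with residue
field `k`).  On a proper curve, two rational functions have the same divisor iff they differ
by a constant in `k^×`, so the group of divisors `div(f)` of degree `0` with `f ∈ O_{C,q}^×`
for all `q ∈ S`, modulo divisors `div(f)` with `v_q(1-f) ≥ n_q` for all `q ∈ S`, is the
quotient `G/H` where `G = {f ∈ K^× : v_q(f) = 0 ∀q∈S}` and `H` is generated by the constants
`k^×` together with `{f : v_q(1-f) ≥ n_q ∀q∈S}`.  The statement: this quotient is isomorphic
to `((∏_{q∈S} k(q)^×)/k^×) × ∏_{q∈S} (1+m_q)/(1+m_q^{n_q})`, where (residue fields being `k`)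
`k(q)^× = k^×`, the subgroup `k^×` is embedded diagonally, `1+m_q^i` is encoded as
`{f : v_q(1-f) ≥ i}`. -/
theorem generalizedJacobian_affine_part (k K : Type) [Field k] [Field K] [Algebra k K]
    [IsAlgClosed k] (S : Type) [Fintype S]
    (v : S → AddValuation K (WithTop ℤ))
    (hsurj : ∀ q, Function.Surjective (v q))
    (hdist : ∀ q q' : S, v q = v q' → q = q')
    (hconst : ∀ (q : S) (c : k), c ≠ 0 → v q (algebraMap k K c) = 0)
    (hres : ∀ (q : S) (x : K), (0 : WithTop ℤ) ≤ v q x →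
      ∃ c : k, (0 : WithTop ℤ) < v q (x - algebraMap k K c))
    (n : S → ℕ) (hn : ∀ q, 1 ≤ n q)
    (G : Subgroup Kˣ) (hG : ∀ f : Kˣ, f ∈ G ↔ ∀ q, v q (f : K) = 0)
    (U Un : S → Subgroup Kˣ)
    (hU : ∀ (q : S) (f : Kˣ), f ∈ U q ↔ ((1 : ℤ) : WithTop ℤ) ≤ v q (1 - (f : K)))
    (hUn : ∀ (q : S) (f : Kˣ), f ∈ Un q ↔ ((n q : ℤ) : WithTop ℤ) ≤ v q (1 - (f : K))) :
    Nonempty ((G ⧸ (Subgroup.closure {f : Kˣ |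
        (∃ c : k, (f : K) = algebraMap k K c) ∨
        ∀ q, ((n q : ℤ) : WithTop ℤ) ≤ v q (1 - (f : K))}).subgroupOf G) ≃*
      (((S → kˣ) ⧸ (MonoidHom.mk' (fun c : kˣ => fun _ : S => c)
          (fun _ _ => rfl)).range) ×
        (∀ q : S, U q ⧸ (Un q).subgroupOf (U q)))) := by
  classical
  rcases isEmpty_or_nonempty S with hS | hS
  · -- trivial case : S empty, both sides are trivial groups
    have hs1 : ∀ x y : (G ⧸ (Subgroup.closure {f : Kˣ |
        (∃ c : k, (f : K) = algebraMap k K c) ∨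
        ∀ q, ((n q : ℤ) : WithTop ℤ) ≤ v q (1 - (f : K))}).subgroupOf G), x = y := by
      intro x y
      induction x using QuotientGroup.induction_on with | _ x =>
      induction y using QuotientGroup.induction_on with | _ y =>
      rw [QuotientGroup.eq]
      exact Subgroup.mem_subgroupOf.mpr
        (Subgroup.subset_closure (Or.inr (fun q => isEmptyElim q)))
    have hs2 : ∀ x y : ((S → kˣ) ⧸ (MonoidHom.mk' (fun c : kˣ => fun _ : S => c)
        (fun _ _ => rfl)).range), x = y := by
      intro x y
      induction x using QuotientGroup.induction_on with | _ x =>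
      induction y using QuotientGroup.induction_on with | _ y =>
      rw [QuotientGroup.eq]
      exact ⟨1, funext fun q => isEmptyElim q⟩
    have hs3 : ∀ x y : (∀ q : S, U q ⧸ (Un q).subgroupOf (U q)), x = y :=
      fun x y => funext fun q => isEmptyElim q
    exact ⟨{ toFun := fun _ => 1, invFun := fun _ => 1,
             left_inv := fun x => hs1 _ _,
             right_inv := fun x => Prod.ext (hs2 _ _) (hs3 _ _),
             map_mul' := fun x y => Prod.ext (hs2 _ _) (hs3 _ _) }⟩
  -- main case
  set φu : kˣ →* Kˣ := Units.map (algebraMap k K : k →* K) with hφu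
  have hφuval : ∀ c : kˣ, ((φu c : Kˣ) : K) = algebraMap k K (c : k) := by
    intro c; rw [hφu]; rfl
  -- residue constants
  have hresG : ∀ (f : ↥G) (q : S), ∃ c : kˣ,
      0 < v q (((f : Kˣ) : K) - algebraMap k K (c : k)) := by
    intro f q
    have h0 : v q ((f : Kˣ) : K) = 0 := (hG f).mp f.2 q
    obtain ⟨c, hc⟩ := hres q ((f : Kˣ) : K) (le_of_eq h0.symm)
    have hc0 : c ≠ 0 := by
      intro h; rw [h, map_zero, sub_zero, h0] at hc; exact lt_irrefl _ hc
    exact ⟨Units.mk0 c hc0, hc⟩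
  choose r hr using hresG
  have huniq : ∀ (q : S) (x : K) (c c' : kˣ), 0 < v q (x - algebraMap k K (c : k)) →
      0 < v q (x - algebraMap k K (c' : k)) → c = c' := by
    intro q x c c' h h'
    by_contra hne
    have hd : ((c : k) - (c' : k)) ≠ 0 := sub_ne_zero.mpr (fun h => hne (Units.ext h))
    have h2 : 0 < v q (algebraMap k K ((c : k) - (c' : k))) := by
      rw [map_sub]
      have heq : algebraMap k K (c : k) - algebraMap k K (c' : k)
          = (x - algebraMap k K (c' : k)) - (x - algebraMap k K (c : k)) := by ring
      rw [heq]
      exact lt_of_lt_of_le (lt_min h' h) ((v q).map_sub _ _)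
    rw [hconst q _ hd] at h2
    exact lt_irrefl _ h2
  have hrmul : ∀ (f g : ↥G) (q : S), r (f * g) q = r f q * r g q := by
    intro f g q
    refine huniq q (((f * g : ↥G) : Kˣ) : K) _ _ (hr (f * g) q) ?_
    have heq : (((f * g : ↥G) : Kˣ) : K) - algebraMap k K ((r f q * r g q : kˣ) : k)
        = ((f : Kˣ) : K) * (((g : Kˣ) : K) - algebraMap k K ((r g q : kˣ) : k))
          + algebraMap k K ((r g q : kˣ) : k)
            * (((f : Kˣ) : K) - algebraMap k K ((r f q : kˣ) : k)) := by
      push_cast [map_mul]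
      ring
    rw [heq]
    refine AddValuation.map_lt_add _ ?_ ?_
    · rw [AddValuation.map_mul, (hG f).mp f.2 q, zero_add]; exact hr g q
    · rw [AddValuation.map_mul, hconst q _ (Units.ne_zero (r g q)), zero_add]; exact hr f q
  -- the first component homomorphism
  set Adiag : Subgroup (S → kˣ) := (MonoidHom.mk' (fun c : kˣ => fun _ : S => c)
    (fun _ _ => rfl)).range with hAdiag
  set R : ↥G →* (S → kˣ) := MonoidHom.mk' (fun f => fun q => r f q)
    (by intro f g; funext q; exact hrmul f g q) with hR
  set Φ₁ : ↥G →* ((S → kˣ) ⧸ Adiag) := (QuotientGroup.mk' Adiag).comp R with hΦ₁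
  -- the second component homomorphism
  have hmemU : ∀ (f : ↥G) (q : S), (f : Kˣ) * (φu (r f q))⁻¹ ∈ U q := by
    intro f q
    rw [hU]
    apply gjap_one_le
    have hc0 : algebraMap k K ((r f q : kˣ) : k) ≠ 0 := by
      rw [← hφuval]; exact Units.ne_zero _
    have heq : (1 : K) - (((f : Kˣ) * (φu (r f q))⁻¹ : Kˣ) : K)
        = -((((f : Kˣ) : K) - algebraMap k K ((r f q : kˣ) : k))
            * (algebraMap k K ((r f q : kˣ) : k))⁻¹) := by
      push_cast [hφuval]
      field_simp
      ring
    rw [heq, AddValuation.map_neg, AddValuation.map_mul, AddValuation.map_inv,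
      hconst q _ (Units.ne_zero (r f q)), neg_zero, add_zero]
    exact hr f q
  set uhom : ∀ q : S, ↥G →* ↥(U q) := fun q => MonoidHom.mk'
    (fun f => ⟨(f : Kˣ) * (φu (r f q))⁻¹, hmemU f q⟩)
    (by
      intro f g
      apply Subtype.ext
      show ((f * g : ↥G) : Kˣ) * (φu (r (f * g) q))⁻¹
          = ((f : Kˣ) * (φu (r f q))⁻¹) * ((g : Kˣ) * (φu (r g q))⁻¹)
      rw [hrmul f g q, map_mul]
      push_cast
      rw [mul_inv]
      exact mul_mul_mul_comm _ _ _ _) with huhom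
  set Φ₂ : ↥G →* (∀ q : S, U q ⧸ (Un q).subgroupOf (U q)) :=
    Pi.monoidHom (fun q => (QuotientGroup.mk' ((Un q).subgroupOf (U q))).comp (uhom q)) with hΦ₂
  set Φ : ↥G →* (((S → kˣ) ⧸ Adiag) × (∀ q : S, U q ⧸ (Un q).subgroupOf (U q))) :=
    Φ₁.prod Φ₂ with hΦ
  -- the subgroup we quotient by is the kernel
  set B : Subgroup Kˣ := ⨅ q, Un q with hB
  have hsetH : {f : Kˣ | (∃ c : k, (f : K) = algebraMap k K c) ∨
      ∀ q, ((n q : ℤ) : WithTop ℤ) ≤ v q (1 - (f : K))} = ↑φu.range ∪ ↑B := by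
    ext f
    simp only [Set.mem_setOf_eq, Set.mem_union, SetLike.mem_coe, MonoidHom.mem_range]
    apply or_congr
    · constructor
      · rintro ⟨c, hc⟩
        have hc0 : c ≠ 0 := fun h => (Units.ne_zero f) (by rw [hc, h, map_zero])
        exact ⟨Units.mk0 c hc0, Units.ext (by rw [hφuval]; exact hc.symm)⟩
      · rintro ⟨c, rfl⟩
        exact ⟨(c : k), (hφuval c).symm⟩
    · rw [hB, Subgroup.mem_iInf]
      exact forall_congr' fun q => (hUn q f).symm
  have hclosure : Subgroup.closure {f : Kˣ | (∃ c : k, (f : K) = algebraMap k K c) ∨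
      ∀ q, ((n q : ℤ) : WithTop ℤ) ≤ v q (1 - (f : K))} = φu.range ⊔ B := by
    rw [hsetH, Subgroup.closure_union, Subgroup.closure_eq, Subgroup.closure_eq]
  have hposUn : ∀ (q : S) (b : Kˣ), b ∈ Un q → 0 < v q (1 - (b : K)) := by
    intro q b hb
    refine lt_of_lt_of_le ?_ ((hUn q b).mp hb)
    exact_mod_cast (by have := hn q; omega : (0 : ℤ) < (n q : ℤ))
  have hker : (Subgroup.closure {f : Kˣ | (∃ c : k, (f : K) = algebraMap k K c) ∨
      ∀ q, ((n q : ℤ) : WithTop ℤ) ≤ v q (1 - (f : K))}).subgroupOf G = Φ.ker := by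
    ext f
    rw [Subgroup.mem_subgroupOf, MonoidHom.mem_ker, hclosure]
    constructor
    · intro hf
      obtain ⟨x, hx, yb, hyb, hxy⟩ := Subgroup.mem_sup.mp hf
      obtain ⟨ca, rfl⟩ := hx
      have hbq : ∀ q, yb ∈ Un q := fun q => (Subgroup.mem_iInf.mp hyb) q
      have hfval : ((f : Kˣ) : K) = algebraMap k K (ca : k) * (yb : K) := by
        rw [← hφuval ca]; exact_mod_cast congrArg (Units.val) hxy.symm
      have hvb : ∀ q, 0 < v q (((f : Kˣ) : K) - algebraMap k K (ca : k)) := by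
        intro q
        have heq : ((f : Kˣ) : K) - algebraMap k K (ca : k)
            = algebraMap k K (ca : k) * ((yb : K) - 1) := by rw [hfval]; ring
        rw [heq, AddValuation.map_mul, hconst q _ (Units.ne_zero ca), zero_add,
          AddValuation.map_sub_swap]
        exact hposUn q yb (hbq q)
      have hrca : ∀ q, r f q = ca := fun q => huniq q _ _ _ (hr f q) (hvb q)
      have h1 : Φ₁ f = 1 := by
        show (QuotientGroup.mk' Adiag) (R f) = 1
        rw [QuotientGroup.mk'_apply, QuotientGroup.eq_one_iff]
        exact ⟨ca, funext fun q => (hrca q).symm⟩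
      have h2 : Φ₂ f = 1 := by
        funext q
        show (QuotientGroup.mk' ((Un q).subgroupOf (U q))) (uhom q f) = 1
        rw [QuotientGroup.mk'_apply, QuotientGroup.eq_one_iff]
        rw [Subgroup.mem_subgroupOf]
        show (f : Kˣ) * (φu (r f q))⁻¹ ∈ Un q
        have : (f : Kˣ) * (φu (r f q))⁻¹ = yb := by
          rw [hrca q, ← hxy, mul_comm (φu ca) yb, mul_inv_cancel_right]
        rw [this]
        exact hbq q
      exact Prod.ext h1 h2
    · intro hf
      have h1 : Φ₁ f = 1 := congrArg Prod.fst hf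
      have h2 : Φ₂ f = 1 := congrArg Prod.snd hf
      rw [hΦ₁, MonoidHom.comp_apply, QuotientGroup.mk'_apply, QuotientGroup.eq_one_iff] at h1
      obtain ⟨ca, hca⟩ := h1
      have hbm : ∀ q, ((f : Kˣ) * (φu (r f q))⁻¹) ∈ Un q := by
        intro q
        have h2q : Φ₂ f q = 1 := congrFun h2 q
        rw [hΦ₂] at h2q
        have h2q' : (QuotientGroup.mk' ((Un q).subgroupOf (U q))) (uhom q f) = 1 := h2q
        rw [QuotientGroup.mk'_apply, QuotientGroup.eq_one_iff, Subgroup.mem_subgroupOf] at h2q'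
        exact h2q'
      refine Subgroup.mem_sup.mpr ⟨φu ca, ⟨ca, rfl⟩, (f : Kˣ) * (φu ca)⁻¹, ?_, ?_⟩
      · refine Subgroup.mem_iInf.mpr (fun q => ?_)
        have : ca = r f q := congrFun hca q
        rw [this]
        exact hbm q
      · rw [mul_comm (φu ca), mul_assoc, inv_mul_cancel, mul_one]
  -- surjectivity
  have hsurjΦ : Function.Surjective Φ := by
    rintro ⟨y₁, y₂⟩
    obtain ⟨a, ha⟩ := QuotientGroup.mk'_surjective Adiag y₁
    have huex : ∀ q, ∃ uq : ↥(U q),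
        QuotientGroup.mk' ((Un q).subgroupOf (U q)) uq = y₂ q :=
      fun q => QuotientGroup.mk'_surjective _ (y₂ q)
    choose u hu using huex
    set N : ℕ := Finset.univ.sup n + 1 with hN
    have hN1 : ∀ q, (n q : ℤ) ≤ (N : ℤ) := by
      intro q
      have := Finset.le_sup (f := n) (Finset.mem_univ q)
      have h2 : n q ≤ N := by omega
      exact_mod_cast h2
    have hN0 : (0 : ℤ) < (N : ℤ) := by
      have : 1 ≤ N := Nat.le_add_left 1 _
      exact_mod_cast this
    set t : S → K := fun q => algebraMap k K ((a q : k)) * ((u q : Kˣ) : K) with ht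
    obtain ⟨f, hf⟩ := gjap_approx v hsurj hdist t (N : ℤ)
    have hU1 : ∀ q, 0 < v q (1 - ((u q : Kˣ) : K)) := by
      intro q
      refine lt_of_lt_of_le ?_ ((hU q _).mp (u q).2)
      exact_mod_cast (zero_lt_one : (0 : ℤ) < 1)
    have hvu : ∀ q, v q ((u q : Kˣ) : K) = 0 := by
      intro q
      have h1 : v q (1 : K) < v q (1 - ((u q : Kˣ) : K)) := by
        rw [AddValuation.map_one]; exact hU1 q
      have h2 := AddValuation.map_sub_eq_of_lt_left (v q) h1
      calc v q ((u q : Kˣ) : K) = v q ((1 : K) - (1 - ((u q : Kˣ) : K))) := by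
            congr 1; ring
        _ = v q 1 := h2
        _ = 0 := (v q).map_one
    have hvt : ∀ q, v q (t q) = 0 := by
      intro q
      show v q (algebraMap k K ((a q : k)) * ((u q : Kˣ) : K)) = 0
      rw [AddValuation.map_mul, hconst q _ (Units.ne_zero (a q)), hvu q, add_zero]
    have hftpos : ∀ q, v q (t q) < v q (f - t q) := by
      intro q
      rw [hvt q]
      exact lt_of_lt_of_le (by exact_mod_cast hN0) (hf q)
    have hvf : ∀ q, v q f = 0 := by
      intro q
      have heq : f = t q + (f - t q) := by ring
      rw [heq, AddValuation.map_add_eq_of_lt_left _ (hftpos q), hvt q]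
    have hf0 : f ≠ 0 := by
      have q0 : S := Classical.arbitrary S
      exact gjap_ne_zero (by rw [hvf q0]; exact (by simp : (0 : WithTop ℤ) ≠ ⊤))
    set fu : Kˣ := Units.mk0 f hf0 with hfu
    have hfuval : (fu : K) = f := rfl
    have hfuG : fu ∈ G := (hG fu).mpr (fun q => hvf q)
    have hra : ∀ q, r ⟨fu, hfuG⟩ q = a q := by
      intro q
      refine huniq q ((fu : K)) _ _ (hr ⟨fu, hfuG⟩ q) ?_
      have heq : (fu : K) - algebraMap k K ((a q : k))
          = (f - t q) + algebraMap k K ((a q : k)) * (((u q : Kˣ) : K) - 1) := by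
        rw [hfuval]
        show f - _ = (f - (algebraMap k K ((a q : k)) * ((u q : Kˣ) : K))) + _
        ring
      rw [heq]
      refine AddValuation.map_lt_add _ ?_ ?_
      · exact lt_of_lt_of_le (by exact_mod_cast hN0) (hf q)
      · rw [AddValuation.map_mul, hconst q _ (Units.ne_zero (a q)), zero_add,
          AddValuation.map_sub_swap]
        exact hU1 q
    refine ⟨⟨fu, hfuG⟩, ?_⟩
    have h1 : Φ₁ ⟨fu, hfuG⟩ = y₁ := by
      rw [← ha]
      show (QuotientGroup.mk' Adiag) (fun q => r ⟨fu, hfuG⟩ q) = (QuotientGroup.mk' Adiag) a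
      congr 1
      funext q
      exact hra q
    have h2 : Φ₂ ⟨fu, hfuG⟩ = y₂ := by
      funext q
      rw [← hu q]
      show (QuotientGroup.mk' _) ((uhom q) ⟨fu, hfuG⟩) = (QuotientGroup.mk' _) (u q)
      rw [QuotientGroup.mk'_eq_mk']
      refine ⟨((uhom q) ⟨fu, hfuG⟩)⁻¹ * u q, ?_, by rw [mul_inv_cancel_left]⟩
      rw [Subgroup.mem_subgroupOf]
      have hval0 : (((uhom q) ⟨fu, hfuG⟩ : ↥(U q)) : Kˣ)
          = fu * (φu (r ⟨fu, hfuG⟩ q))⁻¹ := rfl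
      have hval : ((((uhom q) ⟨fu, hfuG⟩)⁻¹ * u q : ↥(U q)) : Kˣ)
          = fu⁻¹ * φu (r ⟨fu, hfuG⟩ q) * (u q : Kˣ) := by
        push_cast [hval0]
        rw [mul_inv, inv_inv]
      rw [hUn]
      have hval2 : (((((uhom q) ⟨fu, hfuG⟩)⁻¹ * u q : ↥(U q)) : Kˣ)  : K)
          = f⁻¹ * (algebraMap k K ((a q : k)) * ((u q : Kˣ) : K)) := by
        rw [hval, hra q]
        push_cast [hφuval]
        rw [hfuval]
        ring
      rw [hval2]
      have heq : (1 : K) - f⁻¹ * (algebraMap k K ((a q : k)) * ((u q : Kˣ) : K))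
          = (f - t q) / f := by
        field_simp
        rfl
      rw [heq, AddValuation.map_div, hvf q, sub_zero]
      calc ((n q : ℤ) : WithTop ℤ) ≤ ((N : ℤ) : WithTop ℤ) := by exact_mod_cast hN1 q
        _ ≤ v q (f - t q) := hf q
    show Φ ⟨fu, hfuG⟩ = (y₁, y₂)
    exact Prod.ext h1 h2
  have e1 := QuotientGroup.quotientMulEquivOfEq hker
  have e2 := QuotientGroup.quotientKerEquivOfSurjective (G := ↥G) (H := ((S → kˣ) ⧸ Adiag) × (∀ q : S, U q ⧸ (Un q).subgroupOf (U q))) Φ hsurjΦ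
  exact ⟨e1.trans e2⟩
end
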